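/- The map χ ↦ (f ↦ deg_z⟨f,χ⟩) is a bijection between the lattice of cocharacters of a split algebraic torus X ≅ (C^*)^r and the set of semiring homomorphisms from the semiring P(X) of positive rational functions on X to the tropical semiring Z^t = (Z, max, +). -/

import Mathlib

/-- The cocharacter lattice of the split torus `X = (ℂ*)^r`. -/
abbrev LatA (r : ℕ) := Fin r → ℤ

/-- The ring of Laurent polynomials (regular functions on the torus `(ℂ*)^r`);
its elements supported on single exponents are the characters. -/
abbrev LaurentR (r : ℕ) := AddMonoidAlgebra ℂ (LatA r)

instance (r : ℕ) : IsDomain (LaurentR r) := NoZeroDivisors.to_isDomain _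

/-- The field of rational functions on the torus `(ℂ*)^r`. -/
abbrev RatFld (r : ℕ) := FractionRing (LaurentR r)

/-- The rational function attached to a linear combination of characters with
nonnegative integer coefficients `c`. -/
noncomputable def posVal (r : ℕ) (c : LatA r →₀ ℕ) : RatFld r :=
  algebraMap (LaurentR r) _
    (show LaurentR r from AddMonoidAlgebra.ofCoeff (Finsupp.mapRange (Nat.cast : ℕ → ℂ) Nat.cast_zero c))

/-- `P(X)`: the set of positive rational functions on the torus, i.e. ratios `f/g`
of nonzero linear combinations of characters with positive integer coefficients. -/
noncomputable def Pset (r : ℕ) : Set (RatFld r) :=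
  {x | ∃ p q : LatA r →₀ ℕ, p ≠ 0 ∧ q ≠ 0 ∧ x = posVal r p / posVal r q}

/-- `deg_z` of the pullback of a positive combination of characters along the
cocharacter `χ`: the maximum of `⟨a, χ⟩` over the exponents `a` in the support. -/
noncomputable def degAlong (r : ℕ) (χ : LatA r) (p : LatA r →₀ ℕ) (hp : p ≠ 0) : ℤ :=
  p.support.sup' (Finsupp.support_nonempty_iff.mpr hp) fun a => ∑ i, a i * χ i

/-- `deg_z ⟨x, χ⟩` for a positive rational function `x = f/g`:
`deg_z f(z^χ) − deg_z g(z^χ)` (computed via a chosen representation). -/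
noncomputable def degz (r : ℕ) (χ : LatA r)
    (x : RatFld r) (h : ∃ p q : LatA r →₀ ℕ, p ≠ 0 ∧ q ≠ 0 ∧ x = posVal r p / posVal r q) : ℤ :=
  degAlong r χ h.choose h.choose_spec.choose_spec.1 -
    degAlong r χ h.choose_spec.choose h.choose_spec.choose_spec.2.1

/-- A semiring homomorphism from `P(X)` to the tropical semiring `ℤᵗ = (ℤ, max, +)`:
a function taking `1 ↦ 0`, sums to `max` and products to `+` on positive rational
functions. -/
def IsTropHom (r : ℕ) (Φ : RatFld r → ℤ) : Prop :=
  Φ 1 = 0 ∧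
  (∀ x ∈ Pset r, ∀ y ∈ Pset r, Φ (x + y) = max (Φ x) (Φ y)) ∧
  (∀ x ∈ Pset r, ∀ y ∈ Pset r, Φ (x * y) = Φ x + Φ y)

section Aux

open Finsupp

variable {r : ℕ}

/-- coefficient cast `ℕ → ℂ` on Laurent polynomials -/
noncomputable def castR (r : ℕ) (p : LatA r →₀ ℕ) : LaurentR r :=
  AddMonoidAlgebra.ofCoeff (Finsupp.mapRange (Nat.cast : ℕ → ℂ) Nat.cast_zero p)

lemma posVal_def (p : LatA r →₀ ℕ) :
    posVal r p = algebraMap (LaurentR r) (RatFld r) (castR r p) := rfl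

noncomputable def cmul (r : ℕ) (p q : LatA r →₀ ℕ) :
    LatA r →₀ ℕ :=
  (AddMonoidAlgebra.ofCoeff p * AddMonoidAlgebra.ofCoeff q : AddMonoidAlgebra ℕ (LatA r)).coeff

lemma ell_add (χ a b : LatA r) :
    (∑ i, (a + b) i * χ i) = (∑ i, a i * χ i) + ∑ i, b i * χ i := by
  rw [← Finset.sum_add_distrib]
  exact Finset.sum_congr rfl fun i _ => by simp [add_mul]

lemma coeff_mul_ne (p q : LatA r →₀ ℕ) {a b : LatA r}
    (ha : a ∈ p.support) (hb : b ∈ q.support) :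
    (AddMonoidAlgebra.ofCoeff p * AddMonoidAlgebra.ofCoeff q : AddMonoidAlgebra ℕ (LatA r)).coeff
      (a + b) ≠ 0 := by
  classical
  rw [AddMonoidAlgebra.coeff_mul]
  intro h
  rw [Finsupp.sum] at h
  have h2 := (Finset.sum_eq_zero_iff).mp h a ha
  rw [Finsupp.sum] at h2
  have h3 := (Finset.sum_eq_zero_iff).mp h2 b hb
  rw [if_pos rfl] at h3
  exact Nat.mul_ne_zero (Finsupp.mem_support_iff.mp ha) (Finsupp.mem_support_iff.mp hb) h3

lemma mul_ne_zero' {p q : LatA r →₀ ℕ} (hp : p ≠ 0) (hq : q ≠ 0) :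
    cmul r p q ≠ 0 := by
  unfold cmul
  obtain ⟨a, ha⟩ := Finsupp.support_nonempty_iff.mpr hp
  obtain ⟨b, hb⟩ := Finsupp.support_nonempty_iff.mpr hq
  intro h
  exact coeff_mul_ne p q ha hb (by rw [h]; simp)

lemma support_add_nat (p q : LatA r →₀ ℕ) :
    (p + q).support = p.support ∪ q.support := by
  ext x
  simp only [Finsupp.mem_support_iff, Finset.mem_union]
  have e : (p + q) x = p x + q x := rfl
  rw [e]
  omega

lemma addNeZero {p : LatA r →₀ ℕ} (q : LatA r →₀ ℕ)
    (hp : p ≠ 0) : p + q ≠ 0 := by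
  intro h
  apply hp
  have h2 := support_add_nat p q
  rw [h, Finsupp.support_zero] at h2
  exact Finsupp.support_eq_empty.mp (Finset.union_eq_empty.mp h2.symm).1

lemma degAlong_mul (χ : LatA r) {p q : LatA r →₀ ℕ} (hp : p ≠ 0) (hq : q ≠ 0)
    (hpq : cmul r p q ≠ 0) :
    degAlong r χ (cmul r p q) hpq = degAlong r χ p hp + degAlong r χ q hq := by
  classical
  unfold cmul at hpq ⊢
  unfold degAlong
  apply le_antisymm
  · apply Finset.sup'_le
    intro x hx
    have hx2 := AddMonoidAlgebra.support_coeff_mul_subset (AddMonoidAlgebra.ofCoeff p) (AddMonoidAlgebra.ofCoeff q) hx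
    rw [Finset.mem_add] at hx2
    obtain ⟨a, ha, b, hb, rfl⟩ := hx2
    rw [ell_add]
    exact add_le_add (Finset.le_sup' (fun a : LatA r => ∑ i, a i * χ i) ha)
      (Finset.le_sup' (fun a : LatA r => ∑ i, a i * χ i) hb)
  · obtain ⟨a, ha, hae⟩ := Finset.exists_mem_eq_sup'
      (Finsupp.support_nonempty_iff.mpr hp) (fun a : LatA r => ∑ i, a i * χ i)
    obtain ⟨b, hb, hbe⟩ := Finset.exists_mem_eq_sup'
      (Finsupp.support_nonempty_iff.mpr hq) (fun a : LatA r => ∑ i, a i * χ i)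
    rw [hae, hbe, ← ell_add]
    exact Finset.le_sup' (fun a : LatA r => ∑ i, a i * χ i)
      (Finsupp.mem_support_iff.mpr (coeff_mul_ne p q ha hb))

lemma degAlong_add (χ : LatA r) {p q : LatA r →₀ ℕ} (hp : p ≠ 0) (hq : q ≠ 0)
    (hpq : p + q ≠ 0) :
    degAlong r χ (p + q) hpq = max (degAlong r χ p hp) (degAlong r χ q hq) := by
  unfold degAlong
  apply le_antisymm
  · apply Finset.sup'_le
    intro x hx
    rw [support_add_nat, Finset.mem_union] at hx
    rcases hx with h | h
    · exact le_max_of_le_left (Finset.le_sup' (fun a : LatA r => ∑ i, a i * χ i) h)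
    · exact le_max_of_le_right (Finset.le_sup' (fun a : LatA r => ∑ i, a i * χ i) h)
  · apply max_le
    · apply Finset.sup'_le
      intro x hx
      apply Finset.le_sup' (f := fun a : LatA r => ∑ i, a i * χ i)
      rw [support_add_nat, Finset.mem_union]
      exact Or.inl hx
    · apply Finset.sup'_le
      intro x hx
      apply Finset.le_sup' (f := fun a : LatA r => ∑ i, a i * χ i)
      rw [support_add_nat, Finset.mem_union]
      exact Or.inr hx

lemma degAlong_single (χ : LatA r) (a : LatA r) {n : ℕ} (hn : n ≠ 0)
    (h : (Finsupp.single a n : LatA r →₀ ℕ) ≠ 0) :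
    degAlong r χ (Finsupp.single a n) h = ∑ i, a i * χ i := by
  unfold degAlong
  have hs : (Finsupp.single a n : LatA r →₀ ℕ).support = {a} :=
    Finsupp.support_single_ne_zero a hn
  rw [Finset.sup'_congr _ hs fun _ _ => rfl, Finset.sup'_singleton]

lemma degAlong_congr (χ : LatA r) {p q : LatA r →₀ ℕ} (h : p = q) (hp : p ≠ 0) :
    degAlong r χ p hp = degAlong r χ q (h ▸ hp) := by subst h; rfl

lemma castR_add (p q : LatA r →₀ ℕ) : castR r (p + q) = castR r p + castR r q := by
  unfold castR
  rw [Finsupp.mapRange_add (fun x y => Nat.cast_add (R := ℂ) x y) p q]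
  rfl

lemma castR_mul (p q : LatA r →₀ ℕ) :
    castR r (cmul r p q) = castR r p * castR r q := by
  classical
  unfold cmul
  ext x
  simp only [AddMonoidAlgebra.coeff_mul, AddMonoidAlgebra.coeff_ofCoeff]
  simp only [Finsupp.sum, castR, AddMonoidAlgebra.coeff_ofCoeff, AddMonoidAlgebra.coeff_mul,
    Finsupp.support_mapRange_of_injective Nat.cast_zero _ Nat.cast_injective,
    Finsupp.mapRange_apply, Nat.cast_sum, apply_ite (Nat.cast : ℕ → ℂ), Nat.cast_mul,
    Nat.cast_zero]

lemma castR_one : castR r (Finsupp.single 0 1) = 1 := by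
  unfold castR
  rw [Finsupp.mapRange_single, Nat.cast_one]
  exact (AddMonoidAlgebra.one_def).symm

lemma castR_injective : Function.Injective (castR r) :=
  AddMonoidAlgebra.ofCoeff_injective.comp
    (Finsupp.mapRange_injective (Nat.cast : ℕ → ℂ) Nat.cast_zero Nat.cast_injective)

lemma posVal_injective : Function.Injective (posVal r) := by
  intro p q h
  exact castR_injective (IsFractionRing.injective (LaurentR r) (RatFld r) h)

lemma posVal_zero : posVal r 0 = 0 := by
  rw [posVal_def]
  have : castR r 0 = 0 := by ext x; simp [castR]
  rw [this, RingHom.map_zero]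

lemma posVal_ne_zero {p : LatA r →₀ ℕ} (hp : p ≠ 0) : posVal r p ≠ 0 := fun h =>
  hp (posVal_injective (h.trans posVal_zero.symm))

lemma posVal_mul (p q : LatA r →₀ ℕ) :
    posVal r (cmul r p q) = posVal r p * posVal r q := by
  rw [posVal_def, posVal_def, posVal_def, castR_mul, RingHom.map_mul]

lemma posVal_add (p q : LatA r →₀ ℕ) :
    posVal r (p + q) = posVal r p + posVal r q := by
  rw [posVal_def, posVal_def, posVal_def, castR_add, RingHom.map_add]

lemma posVal_one : posVal r (Finsupp.single 0 1) = 1 := by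
  rw [posVal_def, castR_one, RingHom.map_one]

lemma deg_sub_eq (χ : LatA r) {p q p' q' : LatA r →₀ ℕ}
    (hp : p ≠ 0) (hq : q ≠ 0) (hp' : p' ≠ 0) (hq' : q' ≠ 0)
    (h : posVal r p / posVal r q = posVal r p' / posVal r q') :
    degAlong r χ p hp - degAlong r χ q hq = degAlong r χ p' hp' - degAlong r χ q' hq' := by
  rw [div_eq_div_iff (posVal_ne_zero hq) (posVal_ne_zero hq')] at h
  rw [← posVal_mul, ← posVal_mul] at h
  have h2 : cmul r p q' = cmul r p' q := posVal_injective h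
  have e1 := degAlong_mul χ hp hq' (mul_ne_zero' hp hq')
  have e2 := degAlong_mul χ hp' hq (mul_ne_zero' hp' hq)
  have e3 := degAlong_congr χ h2 (mul_ne_zero' hp hq')
  omega

lemma degz_eq (χ : LatA r) (x : RatFld r) (h : x ∈ Pset r) {p q : LatA r →₀ ℕ}
    (hp : p ≠ 0) (hq : q ≠ 0) (hx : x = posVal r p / posVal r q) :
    degz r χ x h = degAlong r χ p hp - degAlong r χ q hq := by
  have h' : ∃ p q : LatA r →₀ ℕ, p ≠ 0 ∧ q ≠ 0 ∧ x = posVal r p / posVal r q := h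
  exact deg_sub_eq χ _ _ _ _ (h'.choose_spec.choose_spec.2.2.symm.trans hx)

lemma mem_Pset {p q : LatA r →₀ ℕ} (hp : p ≠ 0) (hq : q ≠ 0) :
    posVal r p / posVal r q ∈ Pset r := ⟨p, q, hp, hq, rfl⟩

lemma single_one_ne_zero (a : LatA r) : (Finsupp.single a 1 : LatA r →₀ ℕ) ≠ 0 :=
  fun h => one_ne_zero (Finsupp.single_eq_zero.mp h)

lemma posVal_mem {p : LatA r →₀ ℕ} (hp : p ≠ 0) : posVal r p ∈ Pset r :=
  ⟨p, Finsupp.single 0 1, hp, single_one_ne_zero 0, by rw [posVal_one, div_one]⟩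

end Aux
section Main

open Finsupp

variable {r : ℕ}

lemma one_mem_Pset : (1 : RatFld r) ∈ Pset r :=
  ⟨Finsupp.single 0 1, Finsupp.single 0 1, single_one_ne_zero 0, single_one_ne_zero 0,
    by rw [posVal_one, div_one]⟩

lemma part1 (r : ℕ) (χ : LatA r) : ∃ Φ : RatFld r → ℤ, IsTropHom r Φ ∧
    ∀ x (h : x ∈ Pset r), Φ x = degz r χ x h := by
  classical
  refine ⟨fun x => if h : x ∈ Pset r then degz r χ x h else 0, ⟨?_, ?_, ?_⟩, ?_⟩
  · beta_reduce
    rw [dif_pos one_mem_Pset,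
      degz_eq χ 1 one_mem_Pset (single_one_ne_zero 0) (single_one_ne_zero 0)
        (by rw [posVal_one, div_one]),
      sub_self]
  · rintro x ⟨p, q, hp, hq, rfl⟩ y ⟨p', q', hp', hq', rfl⟩
    beta_reduce
    have hn : cmul r p q' + cmul r p' q ≠ 0 :=
      addNeZero _ (mul_ne_zero' hp hq')
    have hd : cmul r q q' ≠ 0 := mul_ne_zero' hq hq'
    have hsum : posVal r p / posVal r q + posVal r p' / posVal r q'
        = posVal r (cmul r p q' + cmul r p' q) / posVal r (cmul r q q') := by
      rw [posVal_add, posVal_mul, posVal_mul, posVal_mul,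
        div_add_div _ _ (posVal_ne_zero hq) (posVal_ne_zero hq')]
      ring
    rw [dif_pos (mem_Pset hp hq), dif_pos (mem_Pset hp' hq'),
      dif_pos (hsum.symm ▸ mem_Pset hn hd),
      degz_eq χ _ (hsum.symm ▸ mem_Pset hn hd) hn hd hsum,
      degz_eq χ _ (mem_Pset hp hq) hp hq rfl,
      degz_eq χ _ (mem_Pset hp' hq') hp' hq' rfl,
      degAlong_add χ (mul_ne_zero' hp hq') (mul_ne_zero' hp' hq) hn,
      degAlong_mul χ hp hq' (mul_ne_zero' hp hq'),
      degAlong_mul χ hp' hq (mul_ne_zero' hp' hq),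
      degAlong_mul χ hq hq' hd]
    omega
  · rintro x ⟨p, q, hp, hq, rfl⟩ y ⟨p', q', hp', hq', rfl⟩
    beta_reduce
    have hn : cmul r p p' ≠ 0 := mul_ne_zero' hp hp'
    have hd : cmul r q q' ≠ 0 := mul_ne_zero' hq hq'
    have hprod : posVal r p / posVal r q * (posVal r p' / posVal r q')
        = posVal r (cmul r p p') / posVal r (cmul r q q') := by
      rw [posVal_mul, posVal_mul, div_mul_div_comm]
    rw [dif_pos (mem_Pset hp hq), dif_pos (mem_Pset hp' hq'),
      dif_pos (hprod.symm ▸ mem_Pset hn hd),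
      degz_eq χ _ (hprod.symm ▸ mem_Pset hn hd) hn hd hprod,
      degz_eq χ _ (mem_Pset hp hq) hp hq rfl,
      degz_eq χ _ (mem_Pset hp' hq') hp' hq' rfl,
      degAlong_mul χ hp hp' hn, degAlong_mul χ hq hq' hd]
    omega
  · intro x h
    beta_reduce
    exact dif_pos h

lemma part2aux (r : ℕ) (Φ : RatFld r → ℤ) (hΦ : IsTropHom r Φ) :
    ∀ x (h : x ∈ Pset r),
      Φ x = degz r (fun i => Φ (posVal r (Finsupp.single (Pi.single i 1) 1))) x h := by
  classical
  obtain ⟨h1, hadd, hmul⟩ := hΦ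
  set χ : LatA r := fun i => Φ (posVal r (Finsupp.single (Pi.single i 1) 1)) with hχ
  have Xmem : ∀ a : LatA r, posVal r (Finsupp.single a 1) ∈ Pset r :=
    fun a => posVal_mem (single_one_ne_zero a)
  have φadd : ∀ a b : LatA r,
      Φ (posVal r (Finsupp.single (a + b) 1))
        = Φ (posVal r (Finsupp.single a 1)) + Φ (posVal r (Finsupp.single b 1)) := by
    intro a b
    have h2 := hmul _ (Xmem a) _ (Xmem b)
    rw [← posVal_mul,
      show cmul r (Finsupp.single a 1) (Finsupp.single b 1) = Finsupp.single (a + b) 1 by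
        unfold cmul
        rw [AddMonoidAlgebra.ofCoeff_single, AddMonoidAlgebra.ofCoeff_single,
          AddMonoidAlgebra.single_mul_single, one_mul, AddMonoidAlgebra.coeff_single]] at h2
    exact h2
  have φlin : ∀ a : LatA r, Φ (posVal r (Finsupp.single a 1)) = ∑ i, a i * χ i := by
    intro a
    let F : LatA r →+ ℤ :=
      AddMonoidHom.mk' (fun a => Φ (posVal r (Finsupp.single a 1))) φadd
    have ha : a = ∑ i, a i • (Pi.single i 1 : LatA r) := by
      conv_lhs => rw [← Finset.univ_sum_single a]
      refine Finset.sum_congr rfl fun i _ => ?_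
      rw [← Pi.single_smul, smul_eq_mul, mul_one]
    calc Φ (posVal r (Finsupp.single a 1))
        = F (∑ i, a i • (Pi.single i 1 : LatA r)) := by rw [← ha]; rfl
      _ = ∑ i, a i • F (Pi.single i 1) := by
          rw [map_sum]
          exact Finset.sum_congr rfl fun i _ => map_zsmul F _ _
      _ = ∑ i, a i * χ i := by
          refine Finset.sum_congr rfl fun i _ => ?_
          rw [smul_eq_mul]
          rfl
  have ΦposSingle : ∀ (n : ℕ), n ≠ 0 →
      ∀ a : LatA r, Φ (posVal r (Finsupp.single a n)) = ∑ i, a i * χ i := by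
    intro n
    induction n with
    | zero => intro h; exact absurd rfl h
    | succ n ih =>
      intro _ a
      by_cases hn : n = 0
      · subst hn; exact φlin a
      · have hsn : (Finsupp.single a n : LatA r →₀ ℕ) ≠ 0 :=
          fun h => hn (Finsupp.single_eq_zero.mp h)
        rw [show (Finsupp.single a (n + 1) : LatA r →₀ ℕ)
            = Finsupp.single a n + Finsupp.single a 1 by rw [← Finsupp.single_add],
          posVal_add, hadd _ (posVal_mem hsn) _ (Xmem a), ih hn a, φlin a, max_self]
  have ΦposVal : ∀ p : LatA r →₀ ℕ, ∀ hp : p ≠ 0, Φ (posVal r p) = degAlong r χ p hp := by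
    intro p
    induction p using Finsupp.induction with
    | zero => intro hp; exact absurd rfl hp
    | single_add a n f haf hn ih =>
      intro hp
      by_cases hf : f = 0
      · have e : Finsupp.single a n + f = Finsupp.single a n := by rw [hf, add_zero]
        rw [degAlong_congr χ e hp]
        conv_lhs => rw [e]
        rw [ΦposSingle n hn a, degAlong_single χ a hn (e ▸ hp)]
      · have hsn : (Finsupp.single a n : LatA r →₀ ℕ) ≠ 0 :=
          fun h => hn (Finsupp.single_eq_zero.mp h)
        rw [posVal_add, hadd _ (posVal_mem hsn) _ (posVal_mem hf),
          ΦposSingle n hn a, ih hf, degAlong_add χ hsn hf hp,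
          degAlong_single χ a hn hsn]
  intro x h
  obtain ⟨p, q, hp, hq, hx⟩ := id h
  have hxq : x * posVal r q = posVal r p := by
    rw [hx, div_mul_cancel₀ _ (posVal_ne_zero hq)]
  have h2 := hmul x h _ (posVal_mem hq)
  rw [hxq, ΦposVal p hp, ΦposVal q hq] at h2
  rw [degz_eq χ x h hp hq hx]
  omega

lemma sum_single_mul (i : Fin r) (c : LatA r) :
    (∑ j, (Pi.single i 1 : LatA r) j * c j) = c i := by
  rw [Finset.sum_eq_single i]
  · rw [Pi.single_eq_same, one_mul]
  · intro j _ hj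
    rw [Pi.single_eq_of_ne hj, zero_mul]
  · intro hi; exact absurd (Finset.mem_univ i) hi

lemma sum_zero_mul (c : LatA r) : (∑ j, (0 : LatA r) j * c j) = 0 := by
  simp

lemma part2 (r : ℕ) (Φ : RatFld r → ℤ) (hΦ : IsTropHom r Φ) :
    ∃! χ : LatA r, ∀ x (h : x ∈ Pset r), Φ x = degz r χ x h := by
  refine ⟨_, part2aux r Φ hΦ, ?_⟩
  intro χ' hχ'
  funext i
  have Xmem : posVal r (Finsupp.single (Pi.single i 1 : LatA r) 1) ∈ Pset r :=
    posVal_mem (single_one_ne_zero _)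
  have hrep : posVal r (Finsupp.single (Pi.single i 1 : LatA r) 1)
      = posVal r (Finsupp.single (Pi.single i 1 : LatA r) 1) / posVal r (Finsupp.single 0 1) := by
    rw [posVal_one, div_one]
  have e1 := hχ' _ Xmem
  have e2 := part2aux r Φ hΦ _ Xmem
  rw [degz_eq χ' _ Xmem (single_one_ne_zero _) (single_one_ne_zero 0) hrep,
    degAlong_single χ' _ one_ne_zero (single_one_ne_zero _),
    degAlong_single χ' 0 one_ne_zero (single_one_ne_zero 0),
    sum_single_mul, sum_zero_mul] at e1
  rw [degz_eq _ _ Xmem (single_one_ne_zero _) (single_one_ne_zero 0) hrep,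
    degAlong_single _ _ one_ne_zero (single_one_ne_zero _),
    degAlong_single _ 0 one_ne_zero (single_one_ne_zero 0),
    sum_single_mul, sum_zero_mul] at e2
  omega

end Main
/-- The map `χ ↦ deg_z⟨·, χ⟩` is a bijection between the cocharacter lattice `ℤ^r`
and the semiring homomorphisms `P(X) → ℤᵗ`: every `deg_z⟨·, χ⟩` extends to a
tropical semiring homomorphism, and every tropical semiring homomorphism agrees
on `P(X)` with `deg_z⟨·, χ⟩` for a unique cocharacter `χ`. -/
theorem stmt_6 (r : ℕ) :
    (∀ χ : LatA r, ∃ Φ : RatFld r → ℤ, IsTropHom r Φ ∧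
      ∀ x (h : x ∈ Pset r), Φ x = degz r χ x h) ∧
    (∀ Φ : RatFld r → ℤ, IsTropHom r Φ →
      ∃! χ : LatA r, ∀ x (h : x ∈ Pset r), Φ x = degz r χ x h) :=
  ⟨part1 r, part2 r⟩
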